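/- Let G be a topological group acting continuously by isometries on a CAT(0) space X, let Q ⊆ G be a compact subset, and let x₀ ∈ X. Then there exists no unbounded Q-evanescent subset of X if and only if there exist λ > 0 and d₀ ≥ 0 such that sup_{g ∈ Q} d(g·x, x) ≥ λ·d(x, x₀) − d₀ for all x ∈ X. -/

import Mathlib

/-- A map `σ : ℝ → X` is a geodesic (isometric) on the interval `[a, b]`. -/
def IsGeodesicOn {X : Type*} [MetricSpace X] (σ : ℝ → X) (a b : ℝ) : Prop :=
  ∀ s ∈ Set.Icc a b, ∀ t ∈ Set.Icc a b, dist (σ s) (σ t) = |s - t|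

/-- A geodesic metric space: any two points are joined by a geodesic segment. -/
def IsGeodesicSpace (X : Type*) [MetricSpace X] : Prop :=
  ∀ x y : X, ∃ σ : ℝ → X, IsGeodesicOn σ 0 (dist x y) ∧ σ 0 = x ∧ σ (dist x y) = y

/-- A CAT(0) space: a geodesic space satisfying the CN inequality of Bruhat–Tits
for all (metric) midpoints. -/
def IsCAT0 (X : Type*) [MetricSpace X] : Prop :=
  IsGeodesicSpace X ∧
    ∀ x c c' m : X, dist m c = dist c c' / 2 → dist m c' = dist c c' / 2 →
      2 * dist m x ^ 2 ≤ dist c' x ^ 2 + dist c x ^ 2 - dist c' c ^ 2 / 2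

/-- A subset of a metric space is (geodesically) convex if it contains every geodesic
segment joining any two of its points. -/
def GConvex {X : Type*} [MetricSpace X] (A : Set X) : Prop :=
  ∀ (σ : ℝ → X) (a b : ℝ), a ≤ b → IsGeodesicOn σ a b → σ a ∈ A → σ b ∈ A →
    ∀ t ∈ Set.Icc a b, σ t ∈ A

/-- `ρ` is an action of the group `G` on `X` by isometries. -/
def IsIsometricAction {G X : Type*} [Group G] [MetricSpace X] (ρ : G → X → X) : Prop :=
  (∀ x, ρ 1 x = x) ∧ (∀ g h x, ρ (g * h) x = ρ g (ρ h x)) ∧ ∀ g : G, Isometry (ρ g)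

/-- A subset `T ⊆ X` is `Q`-evanescent: the set of displacements `d(g x, x)`,
`g ∈ Q`, `x ∈ T`, is bounded. -/
def QEvanescent {G X : Type*} [MetricSpace X] (ρ : G → X → X) (Q : Set G) (T : Set X) : Prop :=
  ∃ C : ℝ, ∀ g ∈ Q, ∀ x ∈ T, dist (ρ g x) x ≤ C

/-- The action is evanescent: there is an unbounded set which is `Q`-evanescent
for every compact `Q ⊆ G`. -/
def Evanescent {G X : Type*} [TopologicalSpace G] [MetricSpace X] (ρ : G → X → X) : Prop :=
  ∃ T : Set X, ¬ Bornology.IsBounded T ∧ ∀ Q : Set G, IsCompact Q → QEvanescent ρ Q T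

/-- The action is weakly evanescent: for every compact `Q ⊆ G` there is an unbounded
`Q`-evanescent set. -/
def WeaklyEvanescent {G X : Type*} [TopologicalSpace G] [MetricSpace X] (ρ : G → X → X) : Prop :=
  ∀ Q : Set G, IsCompact Q → ∃ T : Set X, ¬ Bornology.IsBounded T ∧ QEvanescent ρ Q T

/-- Existence of metric midpoints in a geodesic space. -/
lemma CAT0Aux.mid_exists {X : Type*} [MetricSpace X] (hX : IsGeodesicSpace X) (x y : X) :
    ∃ m : X, dist m x = dist x y / 2 ∧ dist m y = dist x y / 2 := by
  obtain ⟨σ, hσ, h0, hL⟩ := hX x y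
  have hd : 0 ≤ dist x y := dist_nonneg
  refine ⟨σ (dist x y / 2), ?_, ?_⟩
  · have := hσ (dist x y / 2) ⟨by linarith, by linarith⟩ 0 ⟨le_refl _, hd⟩
    rw [h0] at this
    rw [this]; rw [abs_of_nonneg (by linarith)]; ring
  · have := hσ (dist x y / 2) ⟨by linarith, by linarith⟩ (dist x y) ⟨hd, le_refl _⟩
    rw [hL] at this
    rw [this, abs_of_nonpos (by linarith)]; ring

/-- Midpoint lemma with a common endpoint: CN inequality twice. -/
lemma CAT0Aux.midA {X : Type*} [MetricSpace X] (hX : IsCAT0 X) (p q q' m m' : X)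
    (h1 : dist m p = dist p q / 2) (h2 : dist m q = dist p q / 2)
    (h1' : dist m' p = dist p q' / 2) (h2' : dist m' q' = dist p q' / 2) :
    dist m m' ≤ dist q q' / 2 := by
  have A := hX.2 m' p q m h1 h2
  have B := hX.2 q p q' m' h1' h2'
  have e1 : dist q p = dist p q := dist_comm _ _
  have e2 : dist q' p = dist p q' := dist_comm _ _
  have e3 : dist q m' = dist m' q := dist_comm _ _
  have e4 : dist p m' = dist m' p := dist_comm _ _
  have e5 : dist q' q = dist q q' := dist_comm _ _
  have hqq : (0:ℝ) ≤ dist q q' := dist_nonneg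
  have hmm : (0:ℝ) ≤ dist m m' := dist_nonneg
  have f1 : dist p m' ^ 2 = dist p q' ^ 2 / 4 := by rw [e4, h1']; ring
  have f2 : dist q' p ^ 2 = dist p q' ^ 2 := by rw [e2]
  have f3 : dist q m' ^ 2 = dist m' q ^ 2 := by rw [e3]
  have f4 : dist q p ^ 2 = dist p q ^ 2 := by rw [e1]
  have f5 : dist q' q ^ 2 = dist q q' ^ 2 := by rw [e5]
  have key : 4 * dist m m' ^ 2 ≤ dist q q' ^ 2 := by linarith
  nlinarith [key, hqq, hmm]

/-- General midpoint convexity of the metric in a CAT(0) space. -/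
lemma CAT0Aux.mid_general {X : Type*} [MetricSpace X] (hX : IsCAT0 X) (p q p' q' m m' : X)
    (h1 : dist m p = dist p q / 2) (h2 : dist m q = dist p q / 2)
    (h1' : dist m' p' = dist p' q' / 2) (h2' : dist m' q' = dist p' q' / 2) :
    dist m m' ≤ (dist p p' + dist q q') / 2 := by
  obtain ⟨m'', hm1, hm2⟩ := CAT0Aux.mid_exists hX.1 p q'
  have A : dist m m'' ≤ dist q q' / 2 := CAT0Aux.midA hX p q q' m m'' h1 h2 hm1 hm2
  have B : dist m'' m' ≤ dist p p' / 2 := by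
    have hm1' : dist m'' q' = dist q' p / 2 := by rw [hm2, dist_comm p q']
    have hm2' : dist m'' p = dist q' p / 2 := by rw [hm1, dist_comm p q']
    have hn1 : dist m' q' = dist q' p' / 2 := by rw [h2', dist_comm p' q']
    have hn2 : dist m' p' = dist q' p' / 2 := by rw [h1', dist_comm p' q']
    exact CAT0Aux.midA hX q' p p' m'' m' hm1' hm2' hn1 hn2
  calc dist m m' ≤ dist m m'' + dist m'' m' := dist_triangle _ _ _
    _ ≤ (dist p p' + dist q q') / 2 := by linarith

/-- Monod, Lemma on linear growth of displacement: for a continuous isometric action of a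
topological group `G` on a CAT(0) space `X`, a compact `Q ⊆ G` and a basepoint `x₀`, there
is no unbounded `Q`-evanescent set if and only if the displacement over `Q` grows at least
linearly in the distance to `x₀`. -/
theorem no_unbounded_Qevanescent_iff_linear_growth
    {G : Type*} [Group G] [TopologicalSpace G] [IsTopologicalGroup G]
    {X : Type*} [MetricSpace X] (hX : IsCAT0 X)
    (ρ : G → X → X) (hact : IsIsometricAction ρ)
    (hcont : Continuous fun p : G × X => ρ p.1 p.2)
    (Q : Set G) (hQ : IsCompact Q) (x₀ : X) :
    (¬ ∃ T : Set X, ¬ Bornology.IsBounded T ∧ QEvanescent ρ Q T) ↔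
      ∃ lam : ℝ, 0 < lam ∧ ∃ d₀ : ℝ, 0 ≤ d₀ ∧
        ∀ x : X, lam * dist x x₀ - d₀ ≤ sSup ((fun g => dist (ρ g x) x) '' Q) := by
  classical
  set f : X → ℝ := fun x => sSup ((fun g => dist (ρ g x) x) '' Q) with hf
  have hfx : ∀ x : X, sSup ((fun g => dist (ρ g x) x) '' Q) = f x := fun _ => rfl
  obtain ⟨C₀', hC₀'⟩ : ∃ C : ℝ, ∀ g ∈ Q, dist (ρ g x₀) x₀ ≤ C := by
    have hcont' : ContinuousOn (fun g : G => dist (ρ g x₀) x₀) Q :=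
      ((hcont.comp (continuous_id.prodMk continuous_const)).dist continuous_const).continuousOn
    obtain ⟨C, hC⟩ := hQ.bddAbove_image hcont'
    exact ⟨C, fun g hg => hC (Set.mem_image_of_mem _ hg)⟩
  set C₀ : ℝ := max C₀' 0 with hC₀def
  have hC₀nn : 0 ≤ C₀ := le_max_right _ _
  have hC₀ : ∀ g ∈ Q, dist (ρ g x₀) x₀ ≤ C₀ := fun g hg => (hC₀' g hg).trans (le_max_left _ _)
  have hdisp : ∀ x : X, ∀ g ∈ Q, dist (ρ g x) x ≤ 2 * dist x x₀ + C₀ := by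
    intro x g hg
    have h4 := dist_triangle4 (ρ g x) (ρ g x₀) x₀ x
    have he : dist (ρ g x) (ρ g x₀) = dist x x₀ := (hact.2.2 g).dist_eq x x₀
    have hcc : dist x₀ x = dist x x₀ := dist_comm _ _
    have := hC₀ g hg
    linarith
  have hBdd : ∀ x : X, BddAbove ((fun g => dist (ρ g x) x) '' Q) := by
    intro x
    refine ⟨2 * dist x x₀ + C₀, ?_⟩
    rintro _ ⟨g, hg, rfl⟩
    exact hdisp x g hg
  have fnonneg : ∀ x, 0 ≤ f x := by
    intro x
    apply Real.sSup_nonneg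
    rintro _ ⟨g, hg, rfl⟩
    exact dist_nonneg
  have fle : ∀ x : X, ∀ g ∈ Q, dist (ρ g x) x ≤ f x := fun x g hg =>
    le_csSup (hBdd x) (Set.mem_image_of_mem _ hg)
  have fmid : ∀ x y m : X, dist m x = dist x y / 2 → dist m y = dist x y / 2 →
      f m ≤ (f x + f y) / 2 := by
    intro x y m hmx hmy
    refine Real.sSup_le ?_ (by have := fnonneg x; have := fnonneg y; linarith)
    rintro _ ⟨g, hg, rfl⟩
    have iso := hact.2.2 g
    have h1 : dist (ρ g m) (ρ g x) = dist (ρ g x) (ρ g y) / 2 := by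
      rw [iso.dist_eq, iso.dist_eq]; exact hmx
    have h2 : dist (ρ g m) (ρ g y) = dist (ρ g x) (ρ g y) / 2 := by
      rw [iso.dist_eq, iso.dist_eq]; exact hmy
    have key := CAT0Aux.mid_general hX (ρ g x) (ρ g y) x y (ρ g m) m h1 h2 hmx hmy
    have := fle x g hg; have := fle y g hg
    linarith
  constructor
  · -- forward direction
    intro hne
    by_contra hcon
    push_neg at hcon
    simp only [hfx] at hcon
    have hpoint : ∀ n : ℕ, 1 ≤ n → ∃ y : X, f y ≤ f x₀ + 2 ∧ (n : ℝ) ≤ dist y x₀ := by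
      intro n hn
      have hn1 : (1:ℝ) ≤ n := by exact_mod_cast hn
      have hn' : (0:ℝ) < n := by linarith
      obtain ⟨x, hx⟩ := hcon (1 / (n:ℝ)) (by positivity) (n:ℝ) (le_of_lt hn')
      rw [dist_comm x x₀] at hx
      obtain ⟨σ, hσ, h0, hσL⟩ := hX.1 x₀ x
      set L := dist x₀ x with hLdef
      -- hx : f x < 1/n * L - n
      have h0lt : (0:ℝ) < 1/(n:ℝ) * L - n := lt_of_le_of_lt (fnonneg x) hx
      have h1n : (n:ℝ) < 1/(n:ℝ) * L := by linarith
      have h2n : (n:ℝ) * n < (n:ℝ) * (1/(n:ℝ) * L) := mul_lt_mul_of_pos_left h1n hn'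
      have h3n : (n:ℝ) * (1/(n:ℝ) * L) = L := by field_simp
      have hL2 : (n:ℝ) * n ≤ L := by linarith
      have hL1 : (n:ℝ) ≤ L := by nlinarith
      have hLpos : (0:ℝ) < L := by linarith
      -- midpoint convexity along σ
      have hmidσ : ∀ s t : ℝ, s ∈ Set.Icc (0:ℝ) L → t ∈ Set.Icc (0:ℝ) L → s ≤ t →
          f (σ ((s + t) / 2)) ≤ (f (σ s) + f (σ t)) / 2 := by
        intro s t hs ht hst
        have hmemm : (s + t) / 2 ∈ Set.Icc (0:ℝ) L :=
          ⟨by linarith [hs.1, ht.1], by linarith [hs.2, ht.2]⟩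
        have d1 : dist (σ ((s + t) / 2)) (σ s) = dist (σ s) (σ t) / 2 := by
          rw [hσ _ hmemm _ hs, hσ _ hs _ ht,
            abs_of_nonneg (by linarith : (0:ℝ) ≤ (s + t) / 2 - s),
            abs_of_nonpos (by linarith : s - t ≤ (0:ℝ))]
          ring
        have d2 : dist (σ ((s + t) / 2)) (σ t) = dist (σ s) (σ t) / 2 := by
          rw [hσ _ hmemm _ ht, hσ _ hs _ ht,
            abs_of_nonpos (by linarith : (s + t) / 2 - t ≤ (0:ℝ)),
            abs_of_nonpos (by linarith : s - t ≤ (0:ℝ))]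
          ring
        exact fmid (σ s) (σ t) _ d1 d2
      -- dyadic induction
      have key : ∀ k : ℕ, f (σ (L / 2 ^ k)) ≤ (1 - 1 / 2 ^ k) * f x₀ + (1 / 2 ^ k) * f x := by
        intro k
        induction k with
        | zero => norm_num [hσL]
        | succ k ih =>
          have hmem1 : L / 2 ^ k ∈ Set.Icc (0:ℝ) L :=
            ⟨by positivity, div_le_self hLpos.le (one_le_pow₀ (by norm_num))⟩
          have hmem0 : (0:ℝ) ∈ Set.Icc (0:ℝ) L := ⟨le_refl _, hLpos.le⟩
          have hstep := hmidσ 0 (L / 2 ^ k) hmem0 hmem1 (by positivity)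
          have harg : (0 + L / 2 ^ k) / 2 = L / 2 ^ (k + 1) := by rw [pow_succ]; ring
          rw [harg, h0] at hstep
          have hhalf : (1:ℝ) / 2 ^ (k + 1) = (1 / 2 ^ k) / 2 := by rw [pow_succ]; ring
          have h0f := fnonneg x₀
          calc f (σ (L / 2 ^ (k + 1))) ≤ (f x₀ + f (σ (L / 2 ^ k))) / 2 := hstep
            _ ≤ (f x₀ + ((1 - 1 / 2 ^ k) * f x₀ + (1 / 2 ^ k) * f x)) / 2 := by linarith
            _ = (1 - 1 / 2 ^ (k + 1)) * f x₀ + (1 / 2 ^ (k + 1)) * f x := by rw [hhalf]; ring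
      -- choose the dyadic level
      have hex : ∃ k : ℕ, L < (n:ℝ) * 2 ^ (k + 1) := by
        obtain ⟨k, hk⟩ := pow_unbounded_of_one_lt L (one_lt_two : (1:ℝ) < 2)
        have hps : (2:ℝ) ^ (k + 1) = 2 * 2 ^ k := by rw [pow_succ]; ring
        have hp : (0:ℝ) < 2 ^ k := by positivity
        refine ⟨k, ?_⟩
        nlinarith
      set m₀ := Nat.find hex with hm₀def
      have hm₀ : L < (n:ℝ) * 2 ^ (m₀ + 1) := Nat.find_spec hex
      have hm₀' : (n:ℝ) * 2 ^ m₀ ≤ L := by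
        rcases Nat.eq_zero_or_pos m₀ with h | h
        · rw [h]; simpa using hL1
        · have hmin := Nat.find_min hex (m := m₀ - 1) (by omega)
          have hsub : m₀ - 1 + 1 = m₀ := by omega
          rw [hsub] at hmin
          exact not_lt.mp hmin
      set t := L / 2 ^ m₀ with ht
      have hp0 : (0:ℝ) < 2 ^ m₀ := by positivity
      have htn : (n:ℝ) ≤ t := by rw [ht, le_div_iff₀ hp0]; linarith
      have hps : (2:ℝ) ^ (m₀ + 1) = 2 ^ m₀ * 2 := pow_succ _ _
      have ht2n : t < 2 * n := by rw [ht, div_lt_iff₀ hp0]; nlinarith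
      have htmem : t ∈ Set.Icc (0:ℝ) L :=
        ⟨by positivity, div_le_self hLpos.le (one_le_pow₀ (by norm_num))⟩
      refine ⟨σ t, ?_, ?_⟩
      · have hk := key m₀
        have hstep1 : (1 / 2 ^ m₀ : ℝ) * f x < (1 / 2 ^ m₀ : ℝ) * (1/(n:ℝ) * L) := by
          apply mul_lt_mul_of_pos_left _ (by positivity)
          linarith
        have hstep2 : (1 / 2 ^ m₀ : ℝ) * (1/(n:ℝ) * L) = 1/(n:ℝ) * t := by
          rw [ht]; ring
        have hstep3 : 1/(n:ℝ) * t < 1/(n:ℝ) * (2 * n) :=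
          mul_lt_mul_of_pos_left ht2n (by positivity)
        have hstep4 : 1/(n:ℝ) * (2 * n) = 2 := by field_simp
        have hexp : (1 - 1 / 2 ^ m₀ : ℝ) * f x₀ = f x₀ - (1 / 2 ^ m₀) * f x₀ := by ring
        have hpos : (0:ℝ) ≤ (1 / 2 ^ m₀ : ℝ) * f x₀ := by
          have := fnonneg x₀; positivity
        linarith
      · have hd := hσ t htmem 0 ⟨le_refl _, hLpos.le⟩
        rw [h0] at hd
        rw [hd, sub_zero, abs_of_nonneg htmem.1]
        exact htn
    apply hne
    refine ⟨{y : X | f y ≤ f x₀ + 2}, ?_, ⟨f x₀ + 2, ?_⟩⟩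
    · intro hb
      obtain ⟨r, hr⟩ := hb.subset_closedBall x₀
      obtain ⟨n, hnr⟩ := exists_nat_gt r
      obtain ⟨y, hy1, hy2⟩ := hpoint (n + 1) (by omega)
      have hmem : y ∈ Metric.closedBall x₀ r := hr hy1
      rw [Metric.mem_closedBall] at hmem
      have hcast : ((n:ℝ) + 1) ≤ dist y x₀ := by exact_mod_cast hy2
      linarith
    · intro g hg y hy
      exact le_trans (fle y g hg) hy
  · -- backward direction
    rintro ⟨lam, hlam, d₀, hd₀, hgrow⟩ ⟨T, hTunb, C, hC⟩
    apply hTunb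
    have hsub : T ⊆ Metric.closedBall x₀ ((d₀ + max C 0) / lam) := by
      intro x hxT
      have h1 : sSup ((fun g => dist (ρ g x) x) '' Q) ≤ max C 0 := by
        refine Real.sSup_le ?_ (le_max_right _ _)
        rintro _ ⟨g, hg, rfl⟩
        exact le_trans (hC g hg x hxT) (le_max_left _ _)
      have h2 := hgrow x
      rw [Metric.mem_closedBall, le_div_iff₀ hlam]
      nlinarith
    exact Metric.isBounded_closedBall.subset hsub
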